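/- Let X be a geodesic metric space all of whose geodesic triangles are δ-thin (each side is contained in the δ-neighborhood of the union of the other two sides). Let Y ⊆ X and let Π : X → Y satisfy: (Q1) d(x, x') ≤ 1 implies d(Π(x), Π(x')) ≤ C, and (Q2) for y ∈ Y, d(y, Π(y)) ≤ C. Then for every a ≥ 0 there exists b = b(a, δ, C) such that for any geodesic segment g in X whose endpoints lie within distance a of Y, every point x on g satisfies d(x, Π(x)) ≤ b. -/

import Mathlib

/-- `γ` is a geodesic segment from `x` to `y`, parametrized by arclength on
`[0, dist x y]`. -/
def IsGeodesicSegment {X : Type*} [MetricSpace X] (γ : ℝ → X) (x y : X) : Prop :=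
  γ 0 = x ∧ γ (dist x y) = y ∧
    ∀ s ∈ Set.Icc (0 : ℝ) (dist x y), ∀ t ∈ Set.Icc (0 : ℝ) (dist x y),
      dist (γ s) (γ t) = |s - t|

/-- All geodesic triangles are δ-thin: each side lies in the δ-neighborhood of the
union of the other two sides. -/
def ThinTriangles (X : Type*) [MetricSpace X] (δ : ℝ) : Prop :=
  ∀ x y z : X, ∀ g₁ g₂ g₃ : ℝ → X,
    IsGeodesicSegment g₁ x y → IsGeodesicSegment g₂ y z → IsGeodesicSegment g₃ x z →
    ∀ s ∈ Set.Icc (0 : ℝ) (dist x z),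
      Metric.infDist (g₃ s)
        (g₁ '' Set.Icc (0 : ℝ) (dist x y) ∪ g₂ '' Set.Icc (0 : ℝ) (dist y z)) ≤ δ


open Metric Set

lemma chain_dist' {X : Type*} [MetricSpace X] (K : ℝ) (p : ℕ → X) :
    ∀ n : ℕ, (∀ i < n, dist (p i) (p (i+1)) ≤ K) → dist (p 0) (p n) ≤ n * K := by
  intro n
  induction n with
  | zero => simp
  | succ n ih =>
    intro h
    calc dist (p 0) (p (n+1)) ≤ dist (p 0) (p n) + dist (p n) (p (n+1)) := dist_triangle _ _ _
    _ ≤ n * K + K := add_le_add (ih fun i hi => h i (by omega)) (h n (by omega))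
    _ = (n+1 : ℕ) * K := by push_cast; ring

lemma min_clamp_mem {d : ℝ} (hd : 0 ≤ d) (x : ℝ) (hx : 0 ≤ x) : min x d ∈ Icc 0 d :=
  ⟨le_min hx hd, min_le_right _ _⟩

lemma min_clamp_step (d x y : ℝ) (h : |x - y| ≤ 1) : |min x d - min y d| ≤ 1 := by
  refine le_trans (le_trans (abs_min_sub_min_le_max x d y d) ?_) h
  simp [abs_nonneg]

lemma lipP {X : Type*} [MetricSpace X] {C : ℝ} (hC : 0 ≤ C)
    (hgeo : ∀ x y : X, ∃ γ : ℝ → X, IsGeodesicSegment γ x y)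
    (P : X → X) (hQ1 : ∀ x x' : X, dist x x' ≤ 1 → dist (P x) (P x') ≤ C) (w z : X) :
    dist (P w) (P z) ≤ C * (dist w z + 1) := by
  obtain ⟨γ, h0, hd, hiso⟩ := hgeo w z
  set d := dist w z with hdd
  have hd0 : 0 ≤ d := dist_nonneg
  set n := ⌈d⌉₊ with hn
  have key : dist (P (γ (min (0:ℕ) d))) (P (γ (min (n:ℝ) d))) ≤ n * C := by
    apply chain_dist' C (fun i => P (γ (min (i:ℝ) d)))
    intro i hi
    apply hQ1
    rw [hiso _ (min_clamp_mem hd0 _ (by positivity)) _ (min_clamp_mem hd0 _ (by positivity))]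
    apply min_clamp_step
    push_cast
    rw [abs_le]; constructor <;> linarith
  have e0 : min ((0:ℕ):ℝ) d = 0 := by simp [hd0]
  have en : min ((n:ℝ)) d = d := min_eq_right (Nat.le_ceil d)
  rw [e0, en, h0, hd] at key
  have : (n : ℝ) ≤ d + 1 := le_of_lt (Nat.ceil_lt_add_one hd0)
  calc dist (P w) (P z) ≤ n * C := key
  _ ≤ (d+1) * C := by nlinarith
  _ = C * (d + 1) := by ring

lemma distP {X : Type*} [MetricSpace X] {C : ℝ} (hC : 0 ≤ C)
    (hgeo : ∀ x y : X, ∃ γ : ℝ → X, IsGeodesicSegment γ x y)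
    (Y : Set X) (hYne : Y.Nonempty) (P : X → X)
    (hQ1 : ∀ x x' : X, dist x x' ≤ 1 → dist (P x) (P x') ≤ C)
    (hQ2 : ∀ y ∈ Y, dist y (P y) ≤ C) (w : X) :
    dist w (P w) ≤ (C+1) * (infDist w Y + 1) + 2*C := by
  obtain ⟨q, hq, hqd⟩ := (infDist_lt_iff hYne).mp (lt_add_one (infDist w Y))
  have h1 : dist (P q) (P w) ≤ C * (dist q w + 1) := lipP hC hgeo P hQ1 q w
  have h2 : dist q w = dist w q := dist_comm _ _
  have h3 := hQ2 q hq
  have h4 : (0:ℝ) ≤ infDist w Y := infDist_nonneg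
  calc dist w (P w) ≤ dist w q + dist q (P q) + dist (P q) (P w) := dist_triangle4 _ _ _ _
  _ ≤ (infDist w Y + 1) + C + C * ((infDist w Y + 1) + 1) := by
      refine add_le_add (add_le_add hqd.le h3) (h1.trans ?_)
      nlinarith
  _ ≤ (C+1) * (infDist w Y + 1) + 2*C := by nlinarith

lemma geo_lip {X : Type*} [MetricSpace X] {γ : ℝ → X} {x y : X} (h : IsGeodesicSegment γ x y) :
    LipschitzOnWith 1 γ (Icc 0 (dist x y)) := by
  intro a ha b hb
  rw [edist_dist, edist_dist, h.2.2 a ha b hb, Real.dist_eq]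
  simp

lemma geo_image_compact {X : Type*} [MetricSpace X] {γ : ℝ → X} {x y : X}
    (h : IsGeodesicSegment γ x y) : IsCompact (γ '' Icc 0 (dist x y)) :=
  isCompact_Icc.image_of_continuousOn (geo_lip h).continuousOn

lemma diverge {X : Type*} [MetricSpace X] {δ : ℝ} (hδ : 0 ≤ δ)
    (hgeo : ∀ x y : X, ∃ γ : ℝ → X, IsGeodesicSegment γ x y) (hthin : ThinTriangles X δ)
    {K : ℝ} (hK : 0 ≤ K) :
    ∀ k n : ℕ, n ≤ 2^k → ∀ p : ℕ → X, (∀ i < n, dist (p i) (p (i+1)) ≤ K) →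
    ∀ γ : ℝ → X, IsGeodesicSegment γ (p 0) (p n) →
    ∀ s ∈ Icc (0:ℝ) (dist (p 0) (p n)), infDist (γ s) (p '' Iic n) ≤ δ * k + K := by
  intro k
  induction k with
  | zero =>
    intro n hn p hp γ hγ s hs
    have h0 : p 0 ∈ p '' Iic n := ⟨0, by simp, rfl⟩
    have h1 : infDist (γ s) (p '' Iic n) ≤ dist (γ s) (p 0) := infDist_le_dist_of_mem h0
    have h2 : dist (γ s) (p 0) = s := by
      rw [← hγ.1, hγ.2.2 s hs 0 ⟨le_rfl, dist_nonneg⟩]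
      rw [sub_zero, abs_of_nonneg hs.1]
    have h3 : dist (p 0) (p n) ≤ n * K := chain_dist' K p n hp
    have hn1 : (n : ℝ) ≤ 1 := by exact_mod_cast le_trans hn (by norm_num)
    have : (n:ℝ) * K ≤ K := by nlinarith
    simp only [Nat.cast_zero, mul_zero, zero_add]
    linarith [hs.2]
  | succ k ih =>
    intro n hn p hp γ hγ s hs
    set mid := min n (2^k) with hmid
    obtain ⟨γ₁, hγ₁⟩ := hgeo (p 0) (p mid)
    obtain ⟨γ₂, hγ₂⟩ := hgeo (p mid) (p n)
    have hth := hthin (p 0) (p mid) (p n) γ₁ γ₂ γ hγ₁ hγ₂ hγ s hs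
    have hcomp : IsCompact (γ₁ '' Icc 0 (dist (p 0) (p mid)) ∪ γ₂ '' Icc 0 (dist (p mid) (p n))) :=
      (geo_image_compact hγ₁).union (geo_image_compact hγ₂)
    have hne : (γ₁ '' Icc 0 (dist (p 0) (p mid)) ∪ γ₂ '' Icc 0 (dist (p mid) (p n))).Nonempty :=
      ⟨γ₁ 0, Or.inl ⟨0, ⟨le_rfl, dist_nonneg⟩, rfl⟩⟩
    obtain ⟨w, hw, hwd⟩ := hcomp.exists_infDist_eq_dist hne (γ s)
    have hwδ : dist (γ s) w ≤ δ := by rw [← hwd]; exact hth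
    have hnemem : (p '' Iic n).Nonempty := ⟨p 0, 0, by simp, rfl⟩
    have h2k : (2:ℕ)^(k+1) = 2^k + 2^k := by rw [pow_succ]; ring
    have main : infDist w (p '' Iic n) ≤ δ * k + K := by
      rcases hw with ⟨σ, hσ, rfl⟩ | ⟨σ, hσ, rfl⟩
      · have h1 := ih mid (min_le_right _ _) p (fun i hi => hp i (by omega)) γ₁ hγ₁ σ hσ
        refine le_trans ?_ h1
        exact infDist_le_infDist_of_subset
          (image_mono (f := p) (Iic_subset_Iic.mpr (min_le_left _ _))) ⟨p 0, 0, by simp, rfl⟩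
      · set p' : ℕ → X := fun i => p (mid + i) with hp'
        have e0 : p' 0 = p mid := by simp [hp']
        have en : p' (n - mid) = p n := by simp only [hp']; congr 1; omega
        have hγ₂' : IsGeodesicSegment γ₂ (p' 0) (p' (n - mid)) := by rw [e0, en]; exact hγ₂
        have hσ' : σ ∈ Icc (0:ℝ) (dist (p' 0) (p' (n - mid))) := by rw [e0, en]; exact hσ
        have h1 := ih (n - mid) (by omega) p' (fun i hi => hp (mid + i) (by omega)) γ₂ hγ₂' σ hσ'
        refine le_trans ?_ h1
        refine infDist_le_infDist_of_subset ?_ ⟨p' 0, 0, by simp, rfl⟩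
        rintro _ ⟨i, hi, rfl⟩
        exact ⟨mid + i, by simp at hi ⊢; omega, rfl⟩
    calc infDist (γ s) (p '' Iic n) ≤ infDist w (p '' Iic n) + dist (γ s) w :=
          infDist_le_infDist_add_dist
    _ ≤ (δ * k + K) + δ := add_le_add main hwδ
    _ = δ * (k+1 : ℕ) + K := by push_cast; ring

lemma sq_le_two_pow : ∀ m : ℕ, 4 ≤ m → m^2 ≤ 2^m := by
  intro m hm
  induction m with
  | zero => omega
  | succ m ih =>
    rcases Nat.lt_or_ge m 4 with h | h
    · have hm3 : m = 3 := by omega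
      subst hm3; norm_num
    · have h1 := ih h
      have h2 : 2 * m + 1 ≤ m^2 := by nlinarith
      have h3 : (m+1)^2 = m^2 + (2*m+1) := by ring
      have h4 : 2^(m+1) = 2^m + 2^m := by rw [pow_succ]; ring
      omega

lemma clog_le_sqrt (n : ℕ) : (Nat.clog 2 n : ℝ) ≤ Real.sqrt n + 5 := by
  set k := Nat.clog 2 n with hk
  rcases le_or_gt k 5 with h | h
  · have h5 : (k:ℝ) ≤ 5 := by exact_mod_cast h
    have := Real.sqrt_nonneg (n:ℝ)
    linarith
  · have hn1 : 1 < n := by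
      by_contra h'
      have hn : n ≤ 1 := by omega
      have : k = 0 := by interval_cases n <;> simp [hk, Nat.clog]
      omega
    have hlt : 2 ^ (k - 1) < n := by
      have := Nat.pow_pred_clog_lt_self (b := 2) (by norm_num) hn1
      simpa [Nat.pred_eq_sub_one, hk] using this
    have hsq : (k-1)^2 ≤ 2^(k-1) := sq_le_two_pow (k-1) (by omega)
    have hlt2 : (k-1)^2 < n := lt_of_le_of_lt hsq hlt
    have hcast : (((k-1:ℕ)):ℝ) ≤ Real.sqrt n := by
      rw [Real.le_sqrt (by positivity) (by positivity)]
      exact_mod_cast hlt2.le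
    have : (((k-1:ℕ)):ℝ) = (k:ℝ) - 1 := by
      have : 1 ≤ k := by omega
      push_cast [this]; ring
    linarith [this ▸ hcast]


lemma sqrt_add_one_le {R : ℝ} (h : 0 ≤ R) : Real.sqrt (R+1) ≤ Real.sqrt R + 1 := by
  nlinarith [Real.sq_sqrt h, Real.sq_sqrt (show (0:ℝ) ≤ R+1 by linarith),
    Real.sqrt_nonneg R, Real.sqrt_nonneg (R+1)]

lemma quad_bound {t b a : ℝ} (ht : 0 ≤ t) (hb : 0 ≤ b) (ha : 0 ≤ a) (h : t^2 ≤ b * t + a) :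
    t ≤ b + Real.sqrt a := by
  nlinarith [Real.sq_sqrt ha, Real.sqrt_nonneg a, sq_nonneg (t - b - Real.sqrt a),
    sq_nonneg (t + Real.sqrt a)]

set_option maxHeartbeats 2000000 in
lemma core {X : Type*} [MetricSpace X] {δ C : ℝ} (hδ : 0 ≤ δ) (hC : 0 ≤ C)
    (hgeo : ∀ x y : X, ∃ γ : ℝ → X, IsGeodesicSegment γ x y) (hthin : ThinTriangles X δ)
    (Y : Set X) (hYne : Y.Nonempty) (P : X → X) (hPY : ∀ x, P x ∈ Y)
    (hQ1 : ∀ x x' : X, dist x x' ≤ 1 → dist (P x) (P x') ≤ C)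
    (hQ2 : ∀ y ∈ Y, dist y (P y) ≤ C) :
    ∃ b₀ : ℝ, 0 ≤ b₀ ∧ ∀ u v : X, u ∈ Y → v ∈ Y → ∀ g : ℝ → X, IsGeodesicSegment g u v →
      ∀ s ∈ Icc (0:ℝ) (dist u v), infDist (g s) Y ≤ b₀ := by
  have hβ : (0:ℝ) ≤ δ * Real.sqrt (16*C+15) := mul_nonneg hδ (Real.sqrt_nonneg _)
  set β := δ * Real.sqrt (16*C+15) with hβdef
  set α := β + 5*δ + 2*C + 1 with hαdef
  have hα : (0:ℝ) ≤ α := by positivity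
  refine ⟨(β + Real.sqrt α)^2, by positivity, ?_⟩
  intro u v hu hv g hg s hs
  set ℓ := dist u v with hℓ
  have hℓ0 : (0:ℝ) ≤ ℓ := dist_nonneg
  have hcont : ContinuousOn (fun t => infDist (g t) Y) (Icc 0 ℓ) :=
    (continuous_infDist_pt Y).comp_continuousOn (geo_lip hg).continuousOn
  obtain ⟨s₀, hs₀mem, hmax⟩ := isCompact_Icc.exists_isMaxOn ⟨0, le_rfl, hℓ0⟩ hcont
  have hmax' : ∀ t ∈ Icc (0:ℝ) ℓ, infDist (g t) Y ≤ infDist (g s₀) Y := fun t ht => hmax ht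
  set R := infDist (g s₀) Y with hR
  suffices hRb : R ≤ (β + Real.sqrt α)^2 by exact (hmax' s hs).trans hRb
  have hR0 : (0:ℝ) ≤ R := infDist_nonneg
  set F := (C+1)*(R+1) + 2*C with hF
  have hF1 : (1:ℝ) ≤ F := by nlinarith
  have hF0 : (0:ℝ) ≤ F := by linarith
  set T := F + R with hT
  have hT0 : (0:ℝ) ≤ T := by linarith
  set tm := max 0 (s₀ - T) with htmdef
  set tp := min ℓ (s₀ + T) with htpdef
  have hs₀0 : 0 ≤ s₀ := hs₀mem.1
  have hs₀ℓ : s₀ ≤ ℓ := hs₀mem.2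
  have htm : tm ∈ Icc (0:ℝ) ℓ := ⟨le_max_left _ _, max_le hℓ0 (by linarith)⟩
  have htp : tp ∈ Icc (0:ℝ) ℓ := ⟨le_min hℓ0 (by linarith), min_le_left _ _⟩
  have htms : tm ≤ s₀ := max_le hs₀0 (by linarith)
  have hstp : s₀ ≤ tp := le_min hs₀ℓ (by linarith)
  have htmtp : tm ≤ tp := htms.trans hstp
  obtain ⟨γm, hγm⟩ := hgeo (g tm) (P (g tm))
  obtain ⟨γp, hγp⟩ := hgeo (P (g tp)) (g tp)
  set dm := dist (g tm) (P (g tm)) with hdmdef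
  set dp := dist (P (g tp)) (g tp) with hdpdef
  have hdm0 : 0 ≤ dm := dist_nonneg
  have hdp0 : 0 ≤ dp := dist_nonneg
  have hdmF : dm ≤ F := by
    have h1 := distP hC hgeo Y hYne P hQ1 hQ2 (g tm)
    have h2 : infDist (g tm) Y ≤ R := hmax' tm htm
    rw [hdmdef, hF]; nlinarith
  have hdpF : dp ≤ F := by
    have h1 := distP hC hgeo Y hYne P hQ1 hQ2 (g tp)
    have h2 : infDist (g tp) Y ≤ R := hmax' tp htp
    rw [hdpdef, dist_comm, hF]; nlinarith
  set N1 := ⌈F⌉₊ with hN1def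
  set N2 := ⌈tp - tm⌉₊ with hN2def
  have hN1F : dm ≤ (N1:ℝ) := hdmF.trans (Nat.le_ceil F)
  have hN1F' : dp ≤ (N1:ℝ) := hdpF.trans (Nat.le_ceil F)
  have hN2L : tp - tm ≤ (N2:ℝ) := Nat.le_ceil _
  set n := N1 + N2 + N1 with hndef
  have hN1pos : 1 ≤ N1 := Nat.one_le_ceil_iff.mpr (by linarith)
  set p : ℕ → X := fun i =>
    if i ≤ N1 then γm (min (i:ℝ) dm)
    else if i ≤ N1 + N2 then P (g (min (tm + ((i - N1 : ℕ):ℝ)) tp))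
    else γp (min (((i - (N1 + N2) : ℕ)):ℝ) dp) with hpdef
  -- clean descriptions of the chain
  have hpA : ∀ i, i ≤ N1 → p i = γm (min (i:ℝ) dm) := by
    intro i h; simp only [hpdef]; rw [if_pos h]
  have htpeq : N2 = 0 → tp = tm := by
    intro h
    have : tp - tm ≤ 0 := by
      have := Nat.ceil_eq_zero.mp (hN2def ▸ h)
      exact_mod_cast this
    linarith
  have hpB : ∀ i, N1 ≤ i → i ≤ N1 + N2 → p i = P (g (min (tm + ((i - N1 : ℕ):ℝ)) tp)) := by
    intro i h1 h2
    by_cases hlt : i ≤ N1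
    · have heq : i = N1 := le_antisymm hlt h1
      subst heq
      rw [hpA _ le_rfl]
      have e1 : min ((N1:ℝ)) dm = dm := min_eq_right hN1F
      have e2 : ((N1 - N1 : ℕ):ℝ) = 0 := by simp
      rw [e1, e2, add_zero, min_eq_left htmtp, hγm.2.1]
    · simp only [hpdef]; rw [if_neg (by omega), if_pos h2]
  have hpC : ∀ i, N1 + N2 ≤ i → p i = γp (min (((i - (N1 + N2) : ℕ)):ℝ) dp) := by
    intro i h1
    by_cases hlt : i ≤ N1 + N2
    · have heq : i = N1 + N2 := le_antisymm hlt h1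
      subst heq
      rw [hpB _ (by omega) le_rfl]
      have e1 : ((N1 + N2 - N1 : ℕ):ℝ) = (N2:ℝ) := by congr 1; omega
      have e2 : min (tm + (N2:ℝ)) tp = tp := min_eq_right (by linarith)
      have e3 : ((N1 + N2 - (N1 + N2) : ℕ):ℝ) = 0 := by simp
      rw [e1, e2, e3, min_eq_left hdp0, hγp.1]
    · simp only [hpdef]; rw [if_neg (by omega), if_neg (by omega)]
  have hp0 : p 0 = g tm := by
    rw [hpA 0 (by omega)]
    have : min ((0:ℕ):ℝ) dm = 0 := by simp [hdm0]
    rw [this, hγm.1]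
  have hpn : p n = g tp := by
    rw [hpC n (by omega)]
    have e1 : ((n - (N1 + N2) : ℕ):ℝ) = (N1:ℝ) := by congr 1; omega
    rw [e1, min_eq_right hN1F', hγp.2.1]
  -- step bounds
  have hsteps : ∀ i, i < n → dist (p i) (p (i+1)) ≤ C + 1 := by
    intro i hi
    by_cases hA : i + 1 ≤ N1
    · rw [hpA i (by omega), hpA (i+1) hA]
      rw [hγm.2.2 _ (min_clamp_mem hdm0 _ (by positivity)) _ (min_clamp_mem hdm0 _ (by positivity))]
      have h1 : |((i:ℝ)) - ((i+1 : ℕ):ℝ)| ≤ 1 := by push_cast; rw [abs_le]; constructor <;> linarith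
      linarith [min_clamp_step dm ((i:ℝ)) (((i+1:ℕ)):ℝ) h1]
    · by_cases hB : N1 ≤ i ∧ i + 1 ≤ N1 + N2
      · rw [hpB i hB.1 (by omega), hpB (i+1) (by omega) hB.2]
        have hle : dist (P (g (min (tm + ((i - N1 : ℕ):ℝ)) tp)))
            (P (g (min (tm + ((i + 1 - N1 : ℕ):ℝ)) tp))) ≤ C := by
          apply hQ1
          have m1 : min (tm + ((i - N1 : ℕ):ℝ)) tp ∈ Icc (0:ℝ) ℓ :=
            ⟨le_min (by positivity) htp.1, le_trans (min_le_right _ _) htp.2⟩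
          have m2 : min (tm + ((i + 1 - N1 : ℕ):ℝ)) tp ∈ Icc (0:ℝ) ℓ :=
            ⟨le_min (by positivity) htp.1, le_trans (min_le_right _ _) htp.2⟩
          rw [hg.2.2 _ m1 _ m2]
          apply min_clamp_step
          have e : ((i + 1 - N1 : ℕ):ℝ) = ((i - N1 : ℕ):ℝ) + 1 := by
            have : (i + 1 - N1 : ℕ) = (i - N1) + 1 := by omega
            rw [this]; push_cast; ring
          rw [e]; rw [abs_le]; constructor <;> linarith
        linarith
      · have hC1 : N1 + N2 ≤ i := by omega
        rw [hpC i hC1, hpC (i+1) (by omega)]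
        rw [hγp.2.2 _ (min_clamp_mem hdp0 _ (by positivity)) _ (min_clamp_mem hdp0 _ (by positivity))]
        have e : ((i + 1 - (N1 + N2) : ℕ):ℝ) = ((i - (N1 + N2) : ℕ):ℝ) + 1 := by
          have : (i + 1 - (N1 + N2) : ℕ) = (i - (N1 + N2)) + 1 := by omega
          rw [this]; push_cast; ring
        rw [e]
        have h1 : |((i - (N1 + N2) : ℕ):ℝ) - (((i - (N1 + N2) : ℕ):ℝ) + 1)| ≤ 1 := by
          rw [abs_le]; constructor <;> linarith
        linarith [min_clamp_step dp ((i - (N1 + N2) : ℕ):ℝ) (((i - (N1 + N2) : ℕ):ℝ) + 1) h1]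
  -- lower bound on distances from g s₀ to chain points
  have hdstm : dist (g s₀) (g tm) = s₀ - tm := by
    rw [hg.2.2 _ hs₀mem _ htm, abs_of_nonneg (by linarith)]
  have hdstp : dist (g s₀) (g tp) = tp - s₀ := by
    rw [hg.2.2 _ hs₀mem _ htp, abs_of_nonpos (by linarith), neg_sub]
  have hlow : ∀ i, i ≤ n → R - C ≤ dist (g s₀) (p i) := by
    intro i hi
    by_cases hA : i ≤ N1
    · rw [hpA i hA]
      set σ := min ((i:ℝ)) dm with hσdef
      have hσmem : σ ∈ Icc 0 dm := min_clamp_mem hdm0 _ (by positivity)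
      have h1 : dist (g tm) (γm σ) = σ := by
        have := hγm.2.2 0 ⟨le_rfl, hdm0⟩ σ hσmem
        rw [hγm.1] at this
        rw [this, zero_sub, abs_neg, abs_of_nonneg hσmem.1]
      have h2 : dist (g s₀) (g tm) ≤ dist (g s₀) (γm σ) + dist (g tm) (γm σ) := by
        rw [dist_comm (g tm) (γm σ)]; exact dist_triangle _ _ _
      by_cases hcase : 0 ≤ s₀ - T
      · have htmeq : tm = s₀ - T := max_eq_right hcase
        have : s₀ - tm = T := by rw [htmeq]; ring
        have hσF : σ ≤ F := le_trans hσmem.2 hdmF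
        rw [hdstm] at h2
        linarith
      · have htmeq : tm = 0 := max_eq_left (by linarith)
        have hgu : g tm = u := by rw [htmeq]; exact hg.1
        have hdmC : dm ≤ C := by rw [hdmdef, hgu]; exact hQ2 u hu
        have hRu : R ≤ dist (g s₀) (g tm) := by rw [hgu]; exact infDist_le_dist_of_mem hu
        linarith [hσmem.2]
    · by_cases hB : i ≤ N1 + N2
      · rw [hpB i (by omega) hB]
        exact le_trans (by linarith) (infDist_le_dist_of_mem (hPY _))
      · rw [hpC i (by omega)]
        set σ := min (((i - (N1 + N2) : ℕ)):ℝ) dp with hσdef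
        have hσmem : σ ∈ Icc 0 dp := min_clamp_mem hdp0 _ (by positivity)
        have h1 : dist (g tp) (γp σ) = dp - σ := by
          have := hγp.2.2 dp ⟨hdp0, le_rfl⟩ σ hσmem
          rw [hγp.2.1] at this
          rw [this, abs_of_nonneg (by linarith [hσmem.2])]
        have h2 : dist (g s₀) (g tp) ≤ dist (g s₀) (γp σ) + dist (g tp) (γp σ) := by
          rw [dist_comm (g tp) (γp σ)]; exact dist_triangle _ _ _
        by_cases hcase : s₀ + T ≤ ℓ
        · have htpeq2 : tp = s₀ + T := min_eq_right hcase
          have : tp - s₀ = T := by rw [htpeq2]; ring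
          rw [hdstp] at h2
          linarith [hσmem.1]
        · have htpeq2 : tp = ℓ := min_eq_left (by linarith)
          have hgv : g tp = v := by rw [htpeq2]; exact hg.2.1
          have hdpC : dp ≤ C := by rw [hdpdef, hgv, dist_comm]; exact hQ2 v hv
          have hRv : R ≤ dist (g s₀) (g tp) := by rw [hgv]; exact infDist_le_dist_of_mem hv
          linarith [hσmem.1]
  -- the restricted geodesic from g tm to g tp
  have hdtt : dist (g tm) (g tp) = tp - tm := by
    rw [hg.2.2 _ htm _ htp, abs_of_nonpos (by linarith), neg_sub]
  set h : ℝ → X := fun τ => g (tm + τ) with hhdef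
  have hgs : IsGeodesicSegment h (g tm) (g tp) := by
    refine ⟨by simp only [hhdef]; rw [add_zero], ?_, ?_⟩
    · simp only [hhdef]; rw [hdtt]; congr 1; ring
    · intro a ha b hb
      rw [hdtt] at ha hb
      simp only [hhdef]
      rw [hg.2.2 _ ⟨by linarith [ha.1, htm.1], by linarith [ha.2, htp.2]⟩
            _ ⟨by linarith [hb.1, htm.1], by linarith [hb.2, htp.2]⟩]
      congr 1; ring
  have hgs' : IsGeodesicSegment h (p 0) (p n) := by rw [hp0, hpn]; exact hgs
  have hsmem : s₀ - tm ∈ Icc (0:ℝ) (dist (p 0) (p n)) := by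
    rw [hp0, hpn, hdtt]; exact ⟨by linarith, by linarith⟩
  have hdiv := diverge hδ hgeo hthin (K := C+1) (by linarith) (Nat.clog 2 n) n
      (Nat.le_pow_clog one_lt_two n) p hsteps h hgs' (s₀ - tm) hsmem
  have hhs : h (s₀ - tm) = g s₀ := by simp only [hhdef]; congr 1; ring
  rw [hhs] at hdiv
  -- lower bound on infDist
  have hlowinf : R - C ≤ infDist (g s₀) (p '' Iic n) := by
    by_contra hcon
    push_neg at hcon
    obtain ⟨q, ⟨i, hiI, rfl⟩, hqd⟩ := (infDist_lt_iff (s := p '' Iic n) (x := g s₀)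
      ⟨p 0, ⟨0, by simp, rfl⟩⟩).mp hcon
    exact absurd hqd (not_lt.mpr (hlow i hiI))
  have hmain : R - C ≤ δ * (Nat.clog 2 n : ℝ) + (C + 1) := le_trans hlowinf hdiv
  -- size of n
  have hnR : (n:ℝ) ≤ (16*C+15) * (R+1) := by
    have h1 : (N1:ℝ) ≤ F + 1 := le_of_lt (Nat.ceil_lt_add_one hF0)
    have h2 : (N2:ℝ) ≤ (tp - tm) + 1 := le_of_lt (Nat.ceil_lt_add_one (by linarith))
    have h3 : tp - tm ≤ 2*T := by
      have h4 : s₀ - T ≤ tm := by rw [htmdef]; exact le_max_right 0 (s₀ - T)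
      have h5 : tp ≤ s₀ + T := by rw [htpdef]; exact min_le_right ℓ (s₀ + T)
      linarith
    have h4 : (n:ℝ) = (N1:ℝ) + (N2:ℝ) + (N1:ℝ) := by rw [hndef]; push_cast; ring
    have h5 : (0:ℝ) ≤ C * R := mul_nonneg hC hR0
    have h1' : (N1:ℝ) ≤ (C+1)*(R+1) + 2*C + 1 := by rw [← hF]; exact h1
    have h3' : tp - tm ≤ 2*((C+1)*(R+1) + 2*C) + 2*R := by
      rw [hT, hF] at h3; linarith
    rw [h4]
    nlinarith [h1', h2, h3', h5, hC, hR0]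
  -- finish with the quadratic bound
  have hk : (Nat.clog 2 n : ℝ) ≤ Real.sqrt ((16*C+15) * (R+1)) + 5 := by
    refine le_trans (clog_le_sqrt n) ?_
    have := Real.sqrt_le_sqrt hnR
    linarith
  have hsplit : Real.sqrt ((16*C+15) * (R+1)) = Real.sqrt (16*C+15) * Real.sqrt (R+1) :=
    Real.sqrt_mul (by linarith) _
  have hsqR : Real.sqrt (R+1) ≤ Real.sqrt R + 1 := sqrt_add_one_le hR0
  have hs16 : (0:ℝ) ≤ Real.sqrt (16*C+15) := Real.sqrt_nonneg _
  have hfin : R ≤ β * Real.sqrt R + α := by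
    have hk2 : (Nat.clog 2 n : ℝ) ≤ Real.sqrt (16*C+15) * (Real.sqrt R + 1) + 5 := by
      rw [hsplit] at hk
      have := mul_le_mul_of_nonneg_left hsqR hs16
      linarith
    have h1 : δ * (Nat.clog 2 n : ℝ) ≤ δ * (Real.sqrt (16*C+15) * (Real.sqrt R + 1) + 5) :=
      mul_le_mul_of_nonneg_left hk2 hδ
    have h2 : δ * (Real.sqrt (16*C+15) * (Real.sqrt R + 1) + 5)
        = β * Real.sqrt R + β + 5*δ := by rw [hβdef]; ring
    rw [hαdef]
    linarith
  have hsq : Real.sqrt R ≤ β + Real.sqrt α := by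
    apply quad_bound (Real.sqrt_nonneg R) hβ hα
    rw [Real.sq_sqrt hR0]
    exact hfin
  calc R = (Real.sqrt R)^2 := (Real.sq_sqrt hR0).symm
  _ ≤ (β + Real.sqrt α)^2 := by
      apply pow_le_pow_left₀ (Real.sqrt_nonneg R) hsq

/-- a point of the image of a geodesic is within `dist x y` of either endpoint -/
lemma geo_pt_near {X : Type*} [MetricSpace X] {γ : ℝ → X} {x y : X}
    (h : IsGeodesicSegment γ x y) {w : X} (hw : w ∈ γ '' Icc 0 (dist x y)) :
    dist w x ≤ dist x y ∧ dist w y ≤ dist x y := by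
  obtain ⟨σ, hσ, rfl⟩ := hw
  constructor
  · have e : dist (γ σ) x = dist (γ σ) (γ 0) := by rw [h.1]
    rw [e, h.2.2 σ hσ 0 ⟨le_rfl, dist_nonneg⟩, sub_zero, abs_of_nonneg hσ.1]
    exact hσ.2
  · have e : dist (γ σ) y = dist (γ σ) (γ (dist x y)) := by rw [h.2.1]
    rw [e, h.2.2 σ hσ _ ⟨dist_nonneg, le_rfl⟩, abs_of_nonpos (by linarith [hσ.2]), neg_sub]
    linarith [hσ.1]

theorem stmt_14 {X : Type*} [MetricSpace X] (δ C : ℝ) (hδ : 0 ≤ δ) (hC : 0 ≤ C)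
    (hgeo : ∀ x y : X, ∃ γ : ℝ → X, IsGeodesicSegment γ x y)
    (hthin : ThinTriangles X δ)
    (Y : Set X) (P : X → X) (hPY : ∀ x, P x ∈ Y)
    (hQ1 : ∀ x x' : X, dist x x' ≤ 1 → dist (P x) (P x') ≤ C)
    (hQ2 : ∀ y ∈ Y, dist y (P y) ≤ C) :
    ∀ a : ℝ, 0 ≤ a → ∃ b : ℝ,
      ∀ x y : X, ∀ g : ℝ → X, IsGeodesicSegment g x y →
        Metric.infDist x Y ≤ a → Metric.infDist y Y ≤ a →
        ∀ s ∈ Set.Icc (0 : ℝ) (dist x y), dist (g s) (P (g s)) ≤ b := by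
  intro a ha
  rcases isEmpty_or_nonempty X with hX | ⟨⟨x₀⟩⟩
  · exact ⟨0, fun x => (IsEmpty.false x).elim⟩
  have hYne : Y.Nonempty := ⟨P x₀, hPY x₀⟩
  obtain ⟨b₀, hb₀, hcore⟩ := core hδ hC hgeo hthin Y hYne P hPY hQ1 hQ2
  refine ⟨(C+1) * ((2*δ + a + 1 + b₀) + 1) + 2*C, ?_⟩
  intro x y g hg hx hy s hs
  have key : infDist (g s) Y ≤ 2*δ + a + 1 + b₀ := by
    obtain ⟨yx, hyx, hyxd⟩ := (infDist_lt_iff hYne).mp (lt_of_le_of_lt hx (lt_add_one a))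
    obtain ⟨yy, hyy, hyyd⟩ := (infDist_lt_iff hYne).mp (lt_of_le_of_lt hy (lt_add_one a))
    obtain ⟨γ1, hγ1⟩ := hgeo x yy
    obtain ⟨γ2, hγ2⟩ := hgeo yy y
    have hth := hthin x yy y γ1 γ2 g hγ1 hγ2 hg s hs
    obtain ⟨w, hw, hwd⟩ := ((geo_image_compact hγ1).union (geo_image_compact hγ2)).exists_infDist_eq_dist
      ⟨γ1 0, Or.inl ⟨0, ⟨le_rfl, dist_nonneg⟩, rfl⟩⟩ (g s)
    have hwδ : dist (g s) w ≤ δ := by rw [← hwd]; exact hth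
    have hiw : infDist (g s) Y ≤ infDist w Y + δ :=
      le_trans infDist_le_infDist_add_dist (by linarith)
    rcases hw with hw1 | hw2
    · -- w on the geodesic from x to yy : use second triangle
      obtain ⟨σ, hσ, rfl⟩ := hw1
      obtain ⟨γ3, hγ3⟩ := hgeo x yx
      obtain ⟨γ4, hγ4⟩ := hgeo yx yy
      have hth2 := hthin x yx yy γ3 γ4 γ1 hγ3 hγ4 hγ1 σ hσ
      obtain ⟨w', hw', hwd'⟩ := ((geo_image_compact hγ3).union (geo_image_compact hγ4)).exists_infDist_eq_dist
        ⟨γ3 0, Or.inl ⟨0, ⟨le_rfl, dist_nonneg⟩, rfl⟩⟩ (γ1 σ)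
      have hwδ' : dist (γ1 σ) w' ≤ δ := by rw [← hwd']; exact hth2
      have hiw' : infDist (γ1 σ) Y ≤ infDist w' Y + δ :=
        le_trans infDist_le_infDist_add_dist (by linarith)
      have hlast : infDist w' Y ≤ a + 1 + b₀ := by
        rcases hw' with hw3 | hw4
        · -- w' on geodesic from x to yx : within a+1 of yx ∈ Y
          have h1 := (geo_pt_near hγ3 hw3).2
          have h2 : infDist w' Y ≤ dist w' yx := infDist_le_dist_of_mem hyx
          have hb0 := hb₀
          linarith
        · -- w' on geodesic from yx to yy, both in Y : core
          obtain ⟨τ, hτ, rfl⟩ := hw4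
          have := hcore yx yy hyx hyy γ4 hγ4 τ hτ
          linarith
      linarith
    · -- w on the geodesic from yy to y : within a+1 of yy ∈ Y
      have h1 := (geo_pt_near hγ2 hw2).1
      have h2 : infDist w Y ≤ dist w yy := infDist_le_dist_of_mem hyy
      have h3 : dist yy y = dist y yy := dist_comm _ _
      linarith
  have h3 := distP hC hgeo Y hYne P hQ1 hQ2 (g s)
  have h4 : (C+1) * (infDist (g s) Y + 1) ≤ (C+1) * ((2*δ + a + 1 + b₀) + 1) := by
    apply mul_le_mul_of_nonneg_left (by linarith) (by linarith)
  linarith
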